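/- arXiv:2205.12953 — 4 statements merged into one kernel-verified Lean document; each statement's English description precedes it below -/
import Mathlib

section
/- Let k be a field and P, Q ∈ k[x₁,…,xₙ] polynomials. Suppose P is irreducible and vanishes at the origin (i.e. P(0,…,0) = 0). If P divides Q in the formal power series ring k[[x₁,…,xₙ]], then P already divides Q in k[x₁,…,xₙ]. -/
open MvPolynomial

private lemma monomial_mem_span_X_pow {σ R : Type*} [CommRing R] (N : ℕ) :
    ∀ (m : σ →₀ ℕ) (c : R), N ≤ m.sum (fun _ e => e) →
      MvPolynomial.monomial m c ∈ (Ideal.span (Set.range (X : σ → MvPolynomial σ R))) ^ N := by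
  classical
  induction N with
  | zero => intro m c _; simp [Ideal.one_eq_top]
  | succ N ih =>
    intro m c h
    obtain ⟨i, hi⟩ : ∃ i, m i ≠ 0 := by
      by_contra h'
      push_neg at h'
      have : m = 0 := Finsupp.ext h'
      subst this
      simp [Finsupp.sum_zero_index] at h
    have hle : Finsupp.single i 1 ≤ m := by
      rwa [Finsupp.single_le_iff, Nat.one_le_iff_ne_zero]
    have hmeq : Finsupp.single i 1 + (m - Finsupp.single i 1) = m := add_tsub_cancel_of_le hle
    have hdeg : N ≤ (m - Finsupp.single i 1).sum (fun _ e => e) := by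
      have hsum : (Finsupp.single i 1).sum (fun _ e => e)
          + (m - Finsupp.single i 1).sum (fun _ e => e) = m.sum (fun _ e => e) := by
        rw [← Finsupp.sum_add_index (by simp) (by simp), hmeq]
      rw [Finsupp.sum_single_index rfl] at hsum
      omega
    have heq : MvPolynomial.monomial m c = X i * MvPolynomial.monomial (m - Finsupp.single i 1) c := by
      rw [X, monomial_mul, hmeq, one_mul]
    rw [heq, pow_succ']
    exact Ideal.mul_mem_mul (Ideal.subset_span ⟨i, rfl⟩) (ih _ _ hdeg)

private lemma mem_span_X_pow {σ R : Type*} [CommRing R] {p : MvPolynomial σ R} {N : ℕ}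
    (h : ∀ m ∈ p.support, N ≤ m.sum fun _ e => e) :
    p ∈ (Ideal.span (Set.range (X : σ → MvPolynomial σ R))) ^ N := by
  rw [p.as_sum]
  exact Ideal.sum_mem _ fun m hm => monomial_mem_span_X_pow N m _ (h m hm)

set_option synthInstance.maxHeartbeats 1000000 in
set_option maxHeartbeats 1000000 in
/-- If `P` is an irreducible polynomial vanishing at the origin and `P` divides `Q`
in the formal power series ring, then `P` divides `Q` in the polynomial ring. -/
theorem poly_dvd_of_powerSeries_dvd {k : Type*} [Field k] {n : ℕ}
    (P Q : MvPolynomial (Fin n) k)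
    (hirr : Irreducible P)
    (hvan : MvPolynomial.eval (0 : Fin n → k) P = 0)
    (hdvd : (P : MvPowerSeries (Fin n) k) ∣ (Q : MvPowerSeries (Fin n) k)) :
    P ∣ Q := by
  classical
  rcases Nat.eq_zero_or_pos n with hn | hn
  · subst hn
    obtain ⟨a, rfl⟩ := MvPolynomial.C_surjective (Fin 0) P
    rw [MvPolynomial.eval_C] at hvan
    subst hvan
    exact absurd hirr (by simp)
  obtain ⟨f, hf⟩ := hdvd
  set I : Ideal (MvPolynomial (Fin n) k) :=
    Ideal.span (Set.range (X : Fin n → MvPolynomial (Fin n) k)) with hI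
  -- `Q ∈ (P) + I^N` for every `N`
  have hQmem : ∀ N : ℕ, Q ∈ Ideal.span {P} ⊔ I ^ N := by
    intro N
    set bnd : Fin n →₀ ℕ := Finsupp.equivFunOnFinite.symm (fun _ => N) with hbnd
    set g : MvPolynomial (Fin n) k := MvPowerSeries.trunc k bnd f with hg
    have key : ∀ m ∈ (Q - P * g).support, N ≤ m.sum fun _ e => e := by
      intro m hm
      by_contra hlt
      push_neg at hlt
      apply MvPolynomial.mem_support_iff.1 hm
      have hcoord : ∀ j, m j ≤ m.sum fun _ e => e := by
        intro j
        by_cases hj : j ∈ m.support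
        · rw [Finsupp.sum]
          exact Finset.single_le_sum (fun _ _ => Nat.zero_le _) hj
        · simp [Finsupp.notMem_support_iff.1 hj]
      have hQc : Q.coeff m
          = ∑ x ∈ Finset.HasAntidiagonal.antidiagonal m, P.coeff x.1 * (MvPowerSeries.coeff x.2 f) := by
        have h1 := congrArg (MvPowerSeries.coeff m) hf
        rw [MvPolynomial.coeff_coe, MvPowerSeries.coeff_mul] at h1
        rw [h1]
        exact Finset.sum_congr rfl fun x _ => by rw [MvPolynomial.coeff_coe]
      rw [MvPolynomial.coeff_sub, MvPolynomial.coeff_mul, hQc, sub_eq_zero]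
      refine Finset.sum_congr rfl fun x hx => ?_
      congr 1
      rw [hg, MvPowerSeries.coeff_trunc, if_pos]
      have hxm : x.2 ≤ m := by
        rw [Finset.HasAntidiagonal.mem_antidiagonal] at hx
        calc x.2 ≤ x.1 + x.2 := le_add_self
        _ = m := hx
      have hlt2 : ∀ j, x.2 j < N := fun j =>
        lt_of_le_of_lt (le_trans (hxm j) (hcoord j)) hlt
      refine lt_of_le_of_ne (fun j => ?_) (fun habs => ?_)
      · simpa [hbnd] using (hlt2 j).le
      · have := hlt2 ⟨0, hn⟩
        rw [habs] at this
        simp [hbnd] at this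
    have hsub : Q - P * g ∈ I ^ N := mem_span_X_pow key
    have h1 : P * g ∈ Ideal.span {P} := Ideal.mem_span_singleton.2 (dvd_mul_right _ _)
    have h2 := Submodule.add_mem _ (Ideal.mem_sup_left h1) (Ideal.mem_sup_right hsub)
    simpa using h2
  -- pass to the quotient `k[x]/(P)` and use Krull's intersection theorem
  have hPprime : Prime P := hirr.prime
  have hprime : (Ideal.span {P}).IsPrime :=
    (Ideal.span_singleton_prime hirr.ne_zero).2 hPprime
  haveI := hprime
  set π := Ideal.Quotient.mk (Ideal.span {P}) with hπ
  have hmap : π Q ∈ ⨅ N : ℕ, (I.map π) ^ N := by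
    rw [Submodule.mem_iInf]
    intro N
    rw [← Ideal.map_pow, Ideal.mem_quotient_iff_mem_sup, sup_comm]
    exact hQmem N
  have hne : I.map π ≠ ⊤ := by
    intro htop
    have h1 : (1 : MvPolynomial (Fin n) k) ∈ I ⊔ Ideal.span {P} := by
      rw [← Ideal.mem_quotient_iff_mem_sup, htop]
      exact Submodule.mem_top
    have hker : I ⊔ Ideal.span {P} ≤ RingHom.ker (MvPolynomial.eval (0 : Fin n → k)) := by
      refine sup_le ?_ ?_
      · rw [hI, Ideal.span_le]
        rintro _ ⟨i, rfl⟩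
        simp [RingHom.mem_ker]
      · rw [Ideal.span_le]
        rintro _ rfl
        simpa [RingHom.mem_ker] using hvan
    have := hker h1
    rw [RingHom.mem_ker, map_one] at this
    exact one_ne_zero this
  rw [Ideal.iInf_pow_eq_bot_of_isDomain _ hne, Submodule.mem_bot] at hmap
  rw [← Ideal.mem_span_singleton]
  exact (Ideal.Quotient.eq_zero_iff_mem).1 hmap
end

section
/- Let r ≥ 1 and 0 ≤ k < r be integers. Then there is a unique tuple (k₁,…,k_r) ∈ ℤ^r with ∑ k_i = k satisfying ∑_{1≤i<j≤r} [(k_i − k_j)² + (k_i − k_j)] = 0; it is the tuple with k_i = 0 for i ≤ r−k and k_i = 1 for i > r−k. Moreover, for every tuple with ∑ k_i = k this sum is a nonnegative even integer. -/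
open Finset

private lemma aux_nonneg' (d : ℤ) : 0 ≤ d ^ 2 + d := by
  rcases le_or_gt 0 d with h | h
  · nlinarith [sq_nonneg d]
  · nlinarith [mul_nonneg (neg_nonneg.mpr h.le) (neg_nonneg.mpr (show d + 1 ≤ 0 by omega))]

private lemma aux_even' (d : ℤ) : 2 ∣ d ^ 2 + d := by
  have h := Int.even_mul_succ_self d
  rw [show d ^ 2 + d = d * (d + 1) by ring]
  exact h.two_dvd

private lemma aux_zero' (d : ℤ) (h : d ^ 2 + d = 0) : d = 0 ∨ d = -1 := by
  have h2 : d * (d + 1) = 0 := by linear_combination h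
  rcases mul_eq_zero.mp h2 with h3 | h3
  · exact Or.inl h3
  · exact Or.inr (by omega)

private lemma cand_sum' (r k : ℕ) (hk : k < r) :
    (∑ i : Fin r, (if (i : ℕ) < r - k then (0 : ℤ) else 1)) = (k : ℤ) := by
  rw [Fin.sum_univ_eq_sum_range (fun n => if n < r - k then (0 : ℤ) else 1) r,
    Finset.range_eq_Ico,
    ← Finset.sum_Ico_consecutive _ (Nat.zero_le (r - k)) (Nat.sub_le r k)]
  have h1 : ∑ n ∈ Finset.Ico 0 (r - k), (if n < r - k then (0 : ℤ) else 1) = 0 :=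
    Finset.sum_eq_zero fun n hn => by simp [(Finset.mem_Ico.mp hn).2]
  have h2 : ∑ n ∈ Finset.Ico (r - k) r, (if n < r - k then (0 : ℤ) else 1)
      = ((r - (r - k) : ℕ) : ℤ) := by
    rw [Finset.sum_congr rfl (fun n hn => if_neg (by
      have := (Finset.mem_Ico.mp hn).1; omega))]
    simp [Nat.card_Ico]
  rw [h1, h2]
  have : r - (r - k) = k := by omega
  rw [this]
  ring

private lemma cand_S_zero' (r k : ℕ) :
    (∑ p ∈ Finset.univ.filter (fun p : Fin r × Fin r => p.1 < p.2),
        (((if ((p.1 : ℕ) < r - k) then (0:ℤ) else 1) - (if ((p.2 : ℕ) < r - k) then (0:ℤ) else 1)) ^ 2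
          + ((if ((p.1 : ℕ) < r - k) then (0:ℤ) else 1) - (if ((p.2 : ℕ) < r - k) then (0:ℤ) else 1)))) = 0 := by
  refine Finset.sum_eq_zero fun p hp => ?_
  simp only [Finset.mem_filter, Finset.mem_univ, true_and] at hp
  have hlt : (p.1 : ℕ) < (p.2 : ℕ) := hp
  rcases lt_or_ge (p.1 : ℕ) (r - k) with h1 | h1 <;> rcases lt_or_ge (p.2 : ℕ) (r - k) with h2 | h2
  · rw [if_pos h1, if_pos h2]; ring
  · rw [if_pos h1, if_neg (not_lt.mpr h2)]; norm_num
  · omega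
  · rw [if_neg (not_lt.mpr h1), if_neg (not_lt.mpr h2)]; ring

/-- For `0 ≤ k < r`: the sum `∑_{i<j} [(k_i−k_j)² + (k_i−k_j)]` over tuples with
`∑ k_i = k` is a nonnegative even integer; it vanishes for a unique tuple, namely
`k_i = 0` for `i ≤ r−k` and `k_i = 1` for `i > r−k`. -/
theorem unique_minimal_tuple (r k : ℕ) (hr : 1 ≤ r) (hk : k < r) :
    (∀ t : Fin r → ℤ, (∑ i, t i) = (k : ℤ) →
        0 ≤ (∑ p ∈ Finset.univ.filter (fun p : Fin r × Fin r => p.1 < p.2),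
              ((t p.1 - t p.2) ^ 2 + (t p.1 - t p.2)))
        ∧ 2 ∣ (∑ p ∈ Finset.univ.filter (fun p : Fin r × Fin r => p.1 < p.2),
              ((t p.1 - t p.2) ^ 2 + (t p.1 - t p.2)))) ∧
    (∃! t : Fin r → ℤ, (∑ i, t i) = (k : ℤ) ∧
        (∑ p ∈ Finset.univ.filter (fun p : Fin r × Fin r => p.1 < p.2),
            ((t p.1 - t p.2) ^ 2 + (t p.1 - t p.2))) = 0) ∧
    ((∑ i, (fun i : Fin r => if (i : ℕ) < r - k then (0 : ℤ) else 1) i) = (k : ℤ) ∧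
      (∑ p ∈ Finset.univ.filter (fun p : Fin r × Fin r => p.1 < p.2),
          (((if ((p.1 : ℕ) < r - k) then (0:ℤ) else 1) - (if ((p.2 : ℕ) < r - k) then (0:ℤ) else 1)) ^ 2
            + ((if ((p.1 : ℕ) < r - k) then (0:ℤ) else 1) - (if ((p.2 : ℕ) < r - k) then (0:ℤ) else 1)))) = 0) := by
  refine ⟨?_, ?_, cand_sum' r k hk, cand_S_zero' r k⟩
  · intro t _
    constructor
    · exact Finset.sum_nonneg fun p _ => aux_nonneg' _
    · exact Finset.dvd_sum fun p _ => aux_even' _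
  · refine ⟨fun i : Fin r => if (i : ℕ) < r - k then (0 : ℤ) else 1,
      ⟨cand_sum' r k hk, cand_S_zero' r k⟩, ?_⟩
    rintro t ⟨ht1, ht2⟩
    -- every summand vanishes
    have hterm : ∀ p ∈ Finset.univ.filter (fun p : Fin r × Fin r => p.1 < p.2),
        (t p.1 - t p.2) ^ 2 + (t p.1 - t p.2) = 0 :=
      (Finset.sum_eq_zero_iff_of_nonneg (fun p _ => aux_nonneg' _)).mp ht2
    have hpair : ∀ i j : Fin r, i < j → t j = t i ∨ t j = t i + 1 := by
      intro i j hij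
      have h : (t i - t j) ^ 2 + (t i - t j) = 0 := hterm (i, j) (by simp [hij])
      rcases aux_zero' _ h with h' | h' <;> omega
    have hmono : ∀ i j : Fin r, i ≤ j → t i ≤ t j := by
      intro i j h
      rcases eq_or_lt_of_le h with rfl | h'
      · exact le_refl _
      · rcases hpair i j h' with h'' | h'' <;> omega
    have hbound : ∀ i j : Fin r, i ≤ j → t j ≤ t i + 1 := by
      intro i j h
      rcases eq_or_lt_of_le h with rfl | h'
      · omega
      · rcases hpair i j h' with h'' | h'' <;> omega
    set z : Fin r := ⟨0, hr⟩ with hz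
    have hzle : ∀ i : Fin r, z ≤ i := fun i => by
      simp [Fin.le_def, hz]
    -- lower bound : r * t z ≤ k
    have hlow : (r : ℤ) * t z ≤ (k : ℤ) := by
      have := Finset.card_nsmul_le_sum Finset.univ t (t z) (fun i _ => hmono z i (hzle i))
      simpa [ht1, Finset.card_univ, mul_comm, nsmul_eq_mul] using this
    -- upper bound
    have hupp : (k : ℤ) ≤ (r : ℤ) * t z + (r : ℤ) - 1 := by
      have hsplit : ∑ i, t i = t z + ∑ i ∈ Finset.univ.erase z, t i :=
        (Finset.add_sum_erase _ t (Finset.mem_univ z)).symm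
      have hle : ∑ i ∈ Finset.univ.erase z, t i ≤ (Finset.univ.erase z).card • (t z + 1) :=
        Finset.sum_le_card_nsmul _ _ _ (fun i _ => hbound z i (hzle i))
      have hcard : (Finset.univ.erase z).card = r - 1 := by
        rw [Finset.card_erase_of_mem (Finset.mem_univ z), Finset.card_univ, Fintype.card_fin]
      rw [hcard, nsmul_eq_mul] at hle
      have hrc : ((r - 1 : ℕ) : ℤ) = (r : ℤ) - 1 := by push_cast [hr]; ring
      rw [hrc] at hle
      rw [ht1] at hsplit
      nlinarith [hsplit, hle]
    have hrz : (1 : ℤ) ≤ (r : ℤ) := by exact_mod_cast hr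
    have hkz : (k : ℤ) < (r : ℤ) := by exact_mod_cast hk
    have hk0 : (0 : ℤ) ≤ (k : ℤ) := Int.natCast_nonneg k
    have ht0 : t z = 0 := by nlinarith [hlow, hupp, hrz, hkz, hk0]
    have h01 : ∀ i : Fin r, 0 ≤ t i ∧ t i ≤ 1 := fun i =>
      ⟨ht0 ▸ hmono z i (hzle i), by have := hbound z i (hzle i); omega⟩
    funext i
    show t i = if (i : ℕ) < r - k then (0 : ℤ) else 1
    split_ifs with h
    · by_contra hne
      have hti : t i = 1 := by have := h01 i; omega
      have hsub : ∀ j ∈ Finset.Ici i, (1 : ℤ) ≤ t j := fun j hj => by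
        have := hmono i j (Finset.mem_Ici.mp hj); omega
      have h1 : ((Finset.Ici i).card : ℤ) • (1 : ℤ) ≤ ∑ j ∈ Finset.Ici i, t j := by
        exact_mod_cast Finset.card_nsmul_le_sum _ _ _ hsub
      have h2 : ∑ j ∈ Finset.Ici i, t j ≤ ∑ j, t j :=
        Finset.sum_le_sum_of_subset_of_nonneg (Finset.subset_univ _)
          (fun j _ _ => (h01 j).1)
      have hcard : (Finset.Ici i).card = r - (i : ℕ) := Fin.card_Ici i
      rw [hcard] at h1
      rw [ht1] at h2
      have : ((r - (i : ℕ) : ℕ) : ℤ) ≤ (k : ℤ) := by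
        simpa using le_trans h1 h2
      have hi : (i : ℕ) < r := i.isLt
      omega
    · by_contra hne
      have hti : t i = 0 := by have := h01 i; omega
      have hzero : ∀ j : Fin r, j ∉ Finset.Ioi i → t j = 0 := by
        intro j hj
        have hji : j ≤ i := by simpa [Finset.mem_Ioi, not_lt] using hj
        have := hmono j i hji
        have := (h01 j).1
        omega
      have hsum : ∑ j, t j = ∑ j ∈ Finset.Ioi i, t j :=
        (Finset.sum_subset (Finset.subset_univ _) (fun j _ hj => hzero j hj)).symm
      have hle : ∑ j ∈ Finset.Ioi i, t j ≤ (Finset.Ioi i).card • (1 : ℤ) :=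
        Finset.sum_le_card_nsmul _ _ _ (fun j _ => (h01 j).2)
      have hcard : (Finset.Ioi i).card = r - 1 - (i : ℕ) := Fin.card_Ioi i
      rw [hcard, nsmul_eq_mul, mul_one] at hle
      rw [ht1] at hsum
      have : (k : ℤ) ≤ ((r - 1 - (i : ℕ) : ℕ) : ℤ) := hsum ▸ hle
      have hi : (i : ℕ) < r := i.isLt
      omega
end

section
/- In the field of rational functions ℚ(t₁, t₂), for every integer m ≥ 0 one has (t₁^{−m} − t₁^{−m−1})/(1 − t₁^{−1} − t₁t₂^{−1} + t₂^{−1}) + (t₂^{−m} − t₂^{−m−1})/(1 − t₂^{−1} − t₂t₁^{−1} + t₁^{−1}) = (t₁t₂)^{−m} · ∑_{i=0}^{m} t₁^i t₂^{m−i}. -/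
open Finset

lemma key_field {K : Type*} [Field K] (m : ℕ) (x y : K)
    (hx : x ≠ 0) (hy : y ≠ 0) (hx1 : x - 1 ≠ 0) (hy1 : y - 1 ≠ 0) (hxy : y - x ≠ 0) :
    (x⁻¹ ^ m - x⁻¹ ^ (m + 1)) / (1 - x⁻¹ - x * y⁻¹ + y⁻¹)
      + (y⁻¹ ^ m - y⁻¹ ^ (m + 1)) / (1 - y⁻¹ - y * x⁻¹ + x⁻¹)
      = (x * y)⁻¹ ^ m * ∑ i ∈ Finset.range (m + 1), x ^ i * y ^ (m - i) := by
  have hyx : x - y ≠ 0 := fun h => hxy (by linear_combination -h)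
  have hgeom : (∑ i ∈ Finset.range (m + 1), x ^ i * y ^ (m - i)) * (y - x)
      = y ^ (m + 1) - x ^ (m + 1) := by
    have h := geom_sum₂_mul y x (m + 1)
    simp only [Nat.add_sub_cancel] at h
    have hsum : (∑ i ∈ Finset.range (m + 1), x ^ i * y ^ (m - i))
        = ∑ i ∈ Finset.range (m + 1), y ^ i * x ^ (m - i) := by
      rw [← Finset.sum_range_reflect]
      refine Finset.sum_congr rfl fun i hi => ?_
      simp only [Finset.mem_range] at hi
      have h1 : m + 1 - 1 - i = m - i := by omega
      have h2 : m - (m - i) = i := by omega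
      rw [h1, h2, mul_comm]
    rw [hsum]
    exact h
  have hS : (∑ i ∈ Finset.range (m + 1), x ^ i * y ^ (m - i))
      = (y ^ (m + 1) - x ^ (m + 1)) / (y - x) := by
    rw [eq_div_iff hxy]; exact hgeom
  rw [hS]
  have hD1 : 1 - x⁻¹ - x * y⁻¹ + y⁻¹ = (x - 1) * (y - x) / (x * y) := by
    field_simp; ring
  have hD2 : 1 - y⁻¹ - y * x⁻¹ + x⁻¹ = (y - 1) * (x - y) / (x * y) := by
    field_simp; ring
  have h1 : (x⁻¹ ^ m - x⁻¹ ^ (m + 1)) / (1 - x⁻¹ - x * y⁻¹ + y⁻¹)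
      = x⁻¹ ^ m * y / (y - x) := by
    rw [hD1, div_div_eq_mul_div,
      div_eq_div_iff (mul_ne_zero hx1 hxy) hxy]
    field_simp
    linear_combination (-(1/x)^m) * mul_inv_cancel₀ hx
  have h2 : (y⁻¹ ^ m - y⁻¹ ^ (m + 1)) / (1 - y⁻¹ - y * x⁻¹ + x⁻¹)
      = y⁻¹ ^ m * x / (x - y) := by
    rw [hD2, div_div_eq_mul_div,
      div_eq_div_iff (mul_ne_zero hy1 hyx) hyx]
    field_simp
    linear_combination (-(1/y)^m) * mul_inv_cancel₀ hy
  rw [h1, h2]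
  field_simp
  linear_combination ((x - y) * x * y⁻¹ ^ m)
      * (by rw [← mul_pow, mul_inv_cancel₀ hx, one_pow] : x ^ m * x⁻¹ ^ m = 1)
    - ((x - y) * y * x⁻¹ ^ m)
      * (by rw [← mul_pow, mul_inv_cancel₀ hy, one_pow] : y ^ m * y⁻¹ ^ m = 1)

/-- Localization computation of `RΓ(𝒪_C(m))` for `m ≥ 0`, in the field `ℚ(t₁,t₂)`. -/
theorem localization_RGamma_nonneg (m : ℕ) :
    let K := FractionRing (MvPolynomial (Fin 2) ℚ)
    let t₁ : K := algebraMap (MvPolynomial (Fin 2) ℚ) K (MvPolynomial.X 0)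
    let t₂ : K := algebraMap (MvPolynomial (Fin 2) ℚ) K (MvPolynomial.X 1)
    (t₁⁻¹ ^ m - t₁⁻¹ ^ (m + 1)) / (1 - t₁⁻¹ - t₁ * t₂⁻¹ + t₂⁻¹)
      + (t₂⁻¹ ^ m - t₂⁻¹ ^ (m + 1)) / (1 - t₂⁻¹ - t₂ * t₁⁻¹ + t₁⁻¹)
      = (t₁ * t₂)⁻¹ ^ m * ∑ i ∈ Finset.range (m + 1), t₁ ^ i * t₂ ^ (m - i) := by
  intro K t₁ t₂
  have hinj : Function.Injective (algebraMap (MvPolynomial (Fin 2) ℚ) K) :=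
    IsFractionRing.injective _ _
  have hX01 : (MvPolynomial.X 0 : MvPolynomial (Fin 2) ℚ) ≠ MvPolynomial.X 1 := by
    intro h
    have := MvPolynomial.X_injective h
    exact absurd this (by decide)
  have hXone : ∀ i : Fin 2, (MvPolynomial.X i : MvPolynomial (Fin 2) ℚ) ≠ 1 := by
    intro i h
    have := congrArg MvPolynomial.constantCoeff h
    simp [MvPolynomial.constantCoeff_X] at this
  have hx : t₁ ≠ 0 := by
    simp only [t₁, ne_eq, ← (algebraMap (MvPolynomial (Fin 2) ℚ) K).map_zero]
    exact fun h => MvPolynomial.X_ne_zero 0 (hinj h)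
  have hy : t₂ ≠ 0 := by
    simp only [t₂, ne_eq, ← (algebraMap (MvPolynomial (Fin 2) ℚ) K).map_zero]
    exact fun h => MvPolynomial.X_ne_zero 1 (hinj h)
  have hx1 : t₁ - 1 ≠ 0 := by
    rw [sub_ne_zero]
    intro h
    rw [show (1 : K) = algebraMap (MvPolynomial (Fin 2) ℚ) K 1 by simp] at h
    exact hXone 0 (hinj h)
  have hy1 : t₂ - 1 ≠ 0 := by
    rw [sub_ne_zero]
    intro h
    rw [show (1 : K) = algebraMap (MvPolynomial (Fin 2) ℚ) K 1 by simp] at h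
    exact hXone 1 (hinj h)
  have hxy : t₂ - t₁ ≠ 0 := by
    rw [sub_ne_zero]
    exact fun h => hX01 (hinj h.symm)
  exact key_field m t₁ t₂ hx hy hx1 hy1 hxy
end

section
/- In the field of rational functions ℚ(t₁, t₂), for every integer m < 0 one has (t₁^{−m} − t₁^{−m−1})/(1 − t₁^{−1} − t₁t₂^{−1} + t₂^{−1}) + (t₂^{−m} − t₂^{−m−1})/(1 − t₂^{−1} − t₂t₁^{−1} + t₁^{−1}) = −t₁t₂ · ∑_{i=0}^{−m−2} t₁^i t₂^{−m−2−i}, where the sum is empty (hence the right-hand side is 0) when m = −1. -/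
open Finset

set_option maxHeartbeats 2000000 in
/-- Localization computation of `RΓ(𝒪_C(m))` for `m < 0`, in the field `ℚ(t₁,t₂)`. -/
theorem localization_RGamma_neg (m : ℤ) (hm : m < 0) :
    let K := FractionRing (MvPolynomial (Fin 2) ℚ)
    let t₁ : K := algebraMap (MvPolynomial (Fin 2) ℚ) K (MvPolynomial.X 0)
    let t₂ : K := algebraMap (MvPolynomial (Fin 2) ℚ) K (MvPolynomial.X 1)
    (t₁ ^ (-m) - t₁ ^ (-m - 1)) / (1 - t₁⁻¹ - t₁ * t₂⁻¹ + t₂⁻¹)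
      + (t₂ ^ (-m) - t₂ ^ (-m - 1)) / (1 - t₂⁻¹ - t₂ * t₁⁻¹ + t₁⁻¹)
      = -(t₁ * t₂) * ∑ i ∈ Finset.range (-m - 1).toNat, t₁ ^ i * t₂ ^ (-m - 2 - (i : ℤ)) := by
  intro K t₁ t₂
  let _ : Field K := inferInstance
  have hinj : Function.Injective (algebraMap (MvPolynomial (Fin 2) ℚ) K) :=
    IsFractionRing.injective _ _
  have ht₁ : t₁ ≠ 0 := by
    intro h
    have := hinj (h.trans (map_zero _).symm)
    exact MvPolynomial.X_ne_zero 0 this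
  have ht₂ : t₂ ≠ 0 := by
    intro h
    have := hinj (h.trans (map_zero _).symm)
    exact MvPolynomial.X_ne_zero 1 this
  have h1 : t₁ ≠ 1 := by
    intro h
    have := hinj (h.trans (map_one _).symm)
    have := congrArg MvPolynomial.constantCoeff this
    simp at this
  have h2 : t₂ ≠ 1 := by
    intro h
    have := hinj (h.trans (map_one _).symm)
    have := congrArg MvPolynomial.constantCoeff this
    simp at this
  have h12 : t₁ ≠ t₂ := by
    intro h
    have := hinj h
    have : (0 : Fin 2) = 1 := MvPolynomial.X_injective this
    simp at this
  have hsub : t₁ - t₂ ≠ 0 := sub_ne_zero.mpr h12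
  obtain ⟨n, hn⟩ : ∃ n : ℕ, -m - 1 = (n : ℤ) :=
    ⟨(-m - 1).toNat, (Int.toNat_of_nonneg (by omega)).symm⟩
  have hmn : -m = (n : ℤ) + 1 := by omega
  have e1 : t₁ ^ (-m) = t₁ ^ (n + 1) := by rw [hmn]; norm_cast
  have e2 : t₁ ^ (-m - 1) = t₁ ^ n := by rw [hn, zpow_natCast]
  have e3 : t₂ ^ (-m) = t₂ ^ (n + 1) := by rw [hmn]; norm_cast
  have e4 : t₂ ^ (-m - 1) = t₂ ^ n := by rw [hn, zpow_natCast]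
  have etn : (-m - 1).toNat = n := by omega
  have hsum : ∑ i ∈ Finset.range (-m - 1).toNat, t₁ ^ i * t₂ ^ (-m - 2 - (i : ℤ))
      = ∑ i ∈ Finset.range n, t₁ ^ i * t₂ ^ (n - 1 - i) := by
    rw [etn]
    refine Finset.sum_congr rfl fun i hi => ?_
    have hi' : i ≤ n - 1 := by
      have := Finset.mem_range.mp hi; omega
    have : -m - 2 - (i : ℤ) = ((n - 1 - i : ℕ) : ℤ) := by
      have h1n : 1 ≤ n := by have := Finset.mem_range.mp hi; omega
      push_cast [Nat.cast_sub hi', Nat.cast_sub h1n]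
      omega
    rw [this, zpow_natCast]
  rw [e1, e2, e3, e4, hsum]
  have key : (∑ i ∈ Finset.range n, t₁ ^ i * t₂ ^ (n - 1 - i)) * (t₁ - t₂)
      = t₁ ^ n - t₂ ^ n := geom_sum₂_mul t₁ t₂ n
  have hS : (∑ i ∈ Finset.range n, t₁ ^ i * t₂ ^ (n - 1 - i))
      = (t₁ ^ n - t₂ ^ n) / (t₁ - t₂) := by
    field_simp
    linear_combination key
  rw [hS]
  have hD₁ : 1 - t₁⁻¹ - t₁ * t₂⁻¹ + t₂⁻¹ = (t₁ - 1) * (t₂ - t₁) / (t₁ * t₂) := by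
    field_simp
    ring
  have hD₂ : 1 - t₂⁻¹ - t₂ * t₁⁻¹ + t₁⁻¹ = (t₂ - 1) * (t₁ - t₂) / (t₁ * t₂) := by
    field_simp
    ring
  rw [hD₁, hD₂]
  have h1' : t₁ - 1 ≠ 0 := sub_ne_zero.mpr h1
  have h2' : t₂ - 1 ≠ 0 := sub_ne_zero.mpr h2
  have hsub' : t₂ - t₁ ≠ 0 := sub_ne_zero.mpr (Ne.symm h12)
  field_simp
  ring
end
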